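/- Let c > 1 and define a_k, b_k, b_∞ as: a_0 = b_0 = 1, a_k = (-1)^k c^k/∏_{l=1}^k(c^l-1), b_k = ∏_{l=1}^k c^l/(c^l-1), b_∞ = (∏_{l=1}^∞(1-c^{-l}))^{-1}. Fix i ∈ ℤ and t > 0. Then lim_{n→∞} ∑_{k=0}^{n+i} a_k b_{n+i-k} e^{-c^{-n-i+k} · t c^n} = b_∞ · ∑_{k=0}^∞ a_k e^{-c^{-i+k} t}. -/

import Mathlib

open Finset Filter Topology Real

theorem aldous_shields_profile_limit (c : ℝ) (hc : 1 < c) (a b : ℕ → ℝ)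
    (ha0 : a 0 = 1)
    (ha : ∀ k : ℕ, 1 ≤ k →
      a k = (-1 : ℝ) ^ k * c ^ k / ∏ l ∈ Finset.Icc 1 k, (c ^ l - 1))
    (hb0 : b 0 = 1)
    (hb : ∀ k : ℕ, 1 ≤ k →
      b k = (∏ l ∈ Finset.Icc 1 k, c ^ l) / ∏ l ∈ Finset.Icc 1 k, (c ^ l - 1))
    (binf : ℝ) (hbinf : binf = (∏' l : ℕ, (1 - c⁻¹ ^ (l + 1)))⁻¹)
    (i : ℤ) (t : ℝ) (ht : 0 < t) :
    Tendsto (fun n : ℕ => ∑ k ∈ Finset.range (((n : ℤ) + i).toNat + 1),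
        a k * b (((n : ℤ) + i - (k : ℤ)).toNat) *
          Real.exp (-(c ^ (-(n : ℤ) - i + (k : ℤ)) * (t * c ^ n))))
      atTop (𝓝 (binf * ∑' k : ℕ, a k * Real.exp (-(c ^ (-i + (k : ℤ)) * t)))) := by
  have hc0 : (0 : ℝ) < c := lt_trans one_pos hc
  have hcne : c ≠ 0 := ne_of_gt hc0
  set q : ℝ := c⁻¹ with hqdef
  have hq0 : 0 < q := inv_pos.2 hc0
  have hq1 : q < 1 := inv_lt_one_of_one_lt₀ hc
  set e : ℕ → ℝ := fun k => Real.exp (-(c ^ (-i + (k : ℤ)) * t)) with hedef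
  have hepos : ∀ k, 0 < e k := fun k => Real.exp_pos _
  -- factors of the infinite product
  have hfpos : ∀ l : ℕ, 0 < 1 - q ^ (l + 1) := by
    intro l
    have : q ^ (l + 1) < 1 := pow_lt_one₀ hq0.le hq1 (Nat.succ_ne_zero l)
    linarith
  -- summability of the logs
  have hsumlog : Summable fun l : ℕ => Real.log (1 - q ^ (l + 1)) := by
    have hbound : Summable fun l : ℕ => (q * (1 - q)⁻¹) * q ^ l :=
      (summable_geometric_of_lt_one hq0.le hq1).mul_left _
    refine hbound.of_norm_bounded (fun l => ?_)
    have hx0 : 0 < q ^ (l + 1) := pow_pos hq0 _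
    have hxq : q ^ (l + 1) ≤ q := by
      calc q ^ (l + 1) ≤ q ^ 1 := pow_le_pow_of_le_one hq0.le hq1.le (by omega)
        _ = q := pow_one q
    have h1x : 0 < 1 - q ^ (l + 1) := hfpos l
    have hlogle : Real.log (1 - q ^ (l + 1))⁻¹ ≤ (1 - q ^ (l + 1))⁻¹ - 1 :=
      Real.log_le_sub_one_of_pos (inv_pos.2 h1x)
    have hnorm : ‖Real.log (1 - q ^ (l + 1))‖ = Real.log (1 - q ^ (l + 1))⁻¹ := by
      rw [Real.log_inv]
      rw [Real.norm_eq_abs, abs_of_nonpos]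
      exact Real.log_nonpos h1x.le (by linarith)
    rw [hnorm]
    have h1q : 0 < 1 - q := by linarith
    have hle2 : (1 - q ^ (l + 1))⁻¹ - 1 = q ^ (l + 1) / (1 - q ^ (l + 1)) := by
      field_simp
      ring
    have hle3 : q ^ (l + 1) / (1 - q ^ (l + 1)) ≤ q ^ (l + 1) / (1 - q) := by
      apply div_le_div_of_nonneg_left hx0.le h1q
      linarith
    calc Real.log (1 - q ^ (l + 1))⁻¹ ≤ (1 - q ^ (l + 1))⁻¹ - 1 := hlogle
      _ = q ^ (l + 1) / (1 - q ^ (l + 1)) := hle2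
      _ ≤ q ^ (l + 1) / (1 - q) := hle3
      _ = q * (1 - q)⁻¹ * q ^ l := by rw [pow_succ]; ring
  -- the infinite product
  set P : ℝ := ∏' l : ℕ, (1 - q ^ (l + 1)) with hPdef
  have hP : HasProd (fun l : ℕ => 1 - q ^ (l + 1))
      (Real.exp (∑' l : ℕ, Real.log (1 - q ^ (l + 1)))) := by
    have h := hsumlog.hasSum.rexp
    have heq : (rexp ∘ fun l : ℕ => Real.log (1 - q ^ (l + 1)))
        = fun l : ℕ => 1 - q ^ (l + 1) :=
      funext fun l => Real.exp_log (hfpos l)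
    rwa [heq] at h
  have hPeq : P = Real.exp (∑' l : ℕ, Real.log (1 - q ^ (l + 1))) := hP.tprod_eq
  have hPpos : 0 < P := hPeq ▸ Real.exp_pos _
  set Q : ℕ → ℝ := fun N => ∏ l ∈ Finset.range N, (1 - q ^ (l + 1)) with hQdef
  have hQtend : Tendsto Q atTop (𝓝 P) := hP.multipliable.hasProd.tendsto_prod_nat
  have hQpos : ∀ N, 0 < Q N := fun N => Finset.prod_pos fun l _ => hfpos l
  have hQanti : Antitone Q := by
    apply antitone_nat_of_succ_le
    intro N
    have : Q (N + 1) = Q N * (1 - q ^ (N + 1)) := Finset.prod_range_succ _ N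
    rw [this]
    nlinarith [hQpos N, hfpos N, pow_pos hq0 (N + 1)]
  have hPleQ : ∀ N, P ≤ Q N := fun N => hQanti.le_of_tendsto hQtend N
  -- b N = (Q N)⁻¹
  have hbQ : ∀ N, b N = (Q N)⁻¹ := by
    intro N
    rcases Nat.eq_zero_or_pos N with h0 | h1
    · subst h0; simp [hb0, hQdef]
    · have hQN : Q N = (∏ l ∈ Finset.Icc 1 N, (c ^ l - 1)) / ∏ l ∈ Finset.Icc 1 N, c ^ l := by
        rw [← Finset.prod_div_distrib]
        have : Finset.Icc 1 N = Finset.Ico 1 (N + 1) := by rfl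
        rw [this, Finset.prod_Ico_eq_prod_range]
        simp only [Nat.add_sub_cancel]
        apply Finset.prod_congr rfl
        intro l _
        have hcl : (0 : ℝ) < c ^ (1 + l) := pow_pos hc0 _
        rw [hqdef, eq_div_iff hcl.ne', sub_mul, one_mul, inv_pow, add_comm l 1,
          inv_mul_cancel₀ (pow_ne_zero _ hcne)]
      have hnum : (0 : ℝ) < ∏ l ∈ Finset.Icc 1 N, (c ^ l - 1) := by
        apply Finset.prod_pos
        intro l hl
        have : (1 : ℝ) < c ^ l := one_lt_pow₀ hc (by simp at hl; omega)
        linarith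
      have hden : (0 : ℝ) < ∏ l ∈ Finset.Icc 1 N, c ^ l :=
        Finset.prod_pos fun l _ => pow_pos hc0 _
      rw [hb N h1, hQN, inv_div]
  have hbtend : Tendsto b atTop (𝓝 binf) := by
    have h := hQtend.inv₀ hPpos.ne'
    rw [hbinf]
    exact Tendsto.congr (fun N => (hbQ N).symm) h
  have hbpos : ∀ N, 0 < b N := fun N => (hbQ N) ▸ inv_pos.2 (hQpos N)
  have hbinfpos : 0 < binf := by
    rw [hbinf]; exact inv_pos.2 hPpos
  have hble : ∀ N, b N ≤ binf := by
    intro N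
    rw [hbQ N, hbinf]
    exact inv_anti₀ hPpos (hPleQ N)
  -- bound on |a k|
  set C : ℝ := c / (c - 1) with hCdef
  have hC1 : 1 ≤ C := by
    rw [hCdef, le_div_iff₀ (by linarith)]; linarith
  have haC : ∀ k, |a k| ≤ C ^ k := by
    intro k
    rcases Nat.eq_zero_or_pos k with h0 | h1
    · subst h0; simp [ha0]
    · rw [ha k h1]
      have hnum : (0 : ℝ) < ∏ l ∈ Finset.Icc 1 k, (c ^ l - 1) := by
        apply Finset.prod_pos
        intro l hl
        have : (1 : ℝ) < c ^ l := one_lt_pow₀ hc (by simp at hl; omega)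
        linarith
      have hlow : (c - 1) ^ k ≤ ∏ l ∈ Finset.Icc 1 k, (c ^ l - 1) := by
        have : (c - 1) ^ k = ∏ l ∈ Finset.Icc 1 k, (c - 1) := by
          rw [Finset.prod_const, Nat.card_Icc]; simp
        rw [this]
        apply Finset.prod_le_prod
        · intro l _; linarith
        · intro l hl
          have hl1 : 1 ≤ l := by simp at hl; omega
          have : c ^ 1 ≤ c ^ l := pow_le_pow_right₀ hc.le hl1
          simp at this; linarith
      rw [abs_div, abs_mul, abs_pow, abs_pow, abs_neg, abs_one, one_pow, one_mul,
        abs_of_pos hc0, abs_of_pos hnum, hCdef, div_pow]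
      apply div_le_div_of_nonneg_left (pow_nonneg hc0.le k) (pow_pos (by linarith) k) hlow
  -- the dominating sequence
  set g : ℕ → ℝ := fun k => C ^ k * binf * e k with hgdef
  have hgpos : ∀ k, 0 < g k := fun k =>
    mul_pos (mul_pos (pow_pos (by positivity) k) hbinfpos) (hepos k)
  -- recursion for e
  have hestep : ∀ k : ℕ, e (k + 1) = e k * Real.exp (-(c ^ (-i + (k : ℤ)) * ((c - 1) * t))) := by
    intro k
    rw [hedef]
    simp only
    rw [← Real.exp_add]
    congr 1
    have : (-i + ((k : ℕ) + 1 : ℕ) : ℤ) = (-i + (k : ℤ)) + 1 := by push_cast; ring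
    rw [this, zpow_add_one₀ hcne]
    ring
  have hg : Summable g := by
    set R : ℕ → ℝ := fun k => C * Real.exp (-(c ^ (-i + (k : ℤ)) * ((c - 1) * t))) with hRdef
    have hgR : ∀ k, g (k + 1) = R k * g k := by
      intro k
      rw [hgdef]
      simp only
      rw [hestep k, pow_succ, hRdef]
      ring
    have hRt : Tendsto R atTop (𝓝 0) := by
      have h1 : Tendsto (fun k : ℕ => c ^ (-i + (k : ℤ)) * ((c - 1) * t)) atTop atTop := by
        apply Tendsto.atTop_mul_const (by nlinarith)
        have heq : ∀ k : ℕ, c ^ (-i + (k : ℤ)) = c ^ (-i) * c ^ k := by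
          intro k
          rw [zpow_add₀ hcne, zpow_natCast]
        rw [show (fun k : ℕ => c ^ (-i + (k : ℤ))) = fun k : ℕ => c ^ (-i) * c ^ k from
          funext heq]
        exact (tendsto_pow_atTop_atTop_of_one_lt hc).const_mul_atTop (zpow_pos hc0 _)
      have h2 : Tendsto (fun k : ℕ => Real.exp (-(c ^ (-i + (k : ℤ)) * ((c - 1) * t))))
          atTop (𝓝 0) :=
        Real.tendsto_exp_atBot.comp (tendsto_neg_atTop_atBot.comp h1)
      have := h2.const_mul C
      simpa using this
    have hev : ∀ᶠ k in atTop, ‖g (k + 1)‖ ≤ (1 / 2 : ℝ) * ‖g k‖ := by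
      have : ∀ᶠ k in atTop, R k < 1 / 2 := by
        have : (0 : ℝ) < 1 / 2 := by norm_num
        exact hRt.eventually (eventually_lt_nhds this)
      filter_upwards [this] with k hk
      rw [Real.norm_eq_abs, Real.norm_eq_abs, abs_of_pos (hgpos _), abs_of_pos (hgpos _),
        hgR k]
      have := hgpos k
      nlinarith
    exact summable_of_ratio_norm_eventually_le (by norm_num) hev
  -- dominated convergence
  set f : ℕ → ℕ → ℝ := fun N k => if k ≤ N then a k * b (N - k) * e k else 0 with hfdef
  have hpt : ∀ k : ℕ, Tendsto (f · k) atTop (𝓝 (a k * binf * e k)) := by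
    intro k
    have hbk : Tendsto (fun N : ℕ => b (N - k)) atTop (𝓝 binf) :=
      hbtend.comp (tendsto_sub_atTop_nat k)
    have h1 : Tendsto (fun N : ℕ => a k * b (N - k) * e k) atTop (𝓝 (a k * binf * e k)) :=
      (hbk.const_mul (a k)).mul_const (e k)
    apply h1.congr'
    filter_upwards [eventually_ge_atTop k] with N hN
    rw [hfdef]
    simp only [if_pos hN]
  have hbound : ∀ᶠ N in atTop, ∀ k, ‖f N k‖ ≤ g k := by
    apply Eventually.of_forall
    intro N k
    rw [hfdef]
    simp only
    split_ifs with hk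
    · rw [Real.norm_eq_abs, abs_mul, abs_mul, abs_of_pos (hbpos _), abs_of_pos (hepos _)]
      rw [hgdef]
      simp only
      have h1 : |a k| * b (N - k) ≤ C ^ k * binf := by
        apply mul_le_mul (haC k) (hble _) (hbpos _).le (by positivity)
      exact mul_le_mul_of_nonneg_right h1 (hepos k).le
    · simpa using (hgpos k).le
  have key : Tendsto (fun N => ∑' k, f N k) atTop (𝓝 (∑' k, a k * binf * e k)) :=
    tendsto_tsum_of_dominated_convergence hg hpt hbound
  -- identify the tsum with the finite sum
  have hFsum : ∀ N : ℕ, (∑' k, f N k) = ∑ k ∈ Finset.range (N + 1), a k * b (N - k) * e k := by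
    intro N
    rw [tsum_eq_sum (s := Finset.range (N + 1)) (fun k hk => by
      rw [hfdef]; simp only
      rw [if_neg]
      simp at hk; omega)]
    apply Finset.sum_congr rfl
    intro k hk
    rw [hfdef]
    simp only
    rw [if_pos (by simp at hk; omega)]
  -- identify the limit value
  have hlim : (∑' k, a k * binf * e k) = binf * ∑' k : ℕ, a k * e k := by
    rw [← tsum_mul_left]
    apply tsum_congr
    intro k; ring
  have key2 : Tendsto (fun N => ∑ k ∈ Finset.range (N + 1), a k * b (N - k) * e k)
      atTop (𝓝 (binf * ∑' k : ℕ, a k * e k)) := by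
    rw [← hlim]
    exact key.congr hFsum
  -- compose with toNat
  have htoNat : Tendsto (fun n : ℕ => ((n : ℤ) + i).toNat) atTop atTop := by
    apply tendsto_atTop_atTop.2
    intro B
    exact ⟨B + i.natAbs, fun n hn => by omega⟩
  have hcomp := key2.comp htoNat
  apply hcomp.congr
  intro n
  simp only [Function.comp]
  apply Finset.sum_congr rfl
  intro k hk
  simp only [Finset.mem_range] at hk
  have h1 : (((n : ℤ) + i) - (k : ℤ)).toNat = ((n : ℤ) + i).toNat - k := by omega
  have hexp : c ^ (-(n : ℤ) - i + (k : ℤ)) * (t * c ^ n) = c ^ (-i + (k : ℤ)) * t := by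
    rw [← zpow_natCast c n]
    rw [show c ^ (-(n : ℤ) - i + (k : ℤ)) * (t * c ^ (n : ℤ))
        = c ^ (-(n : ℤ) - i + (k : ℤ)) * c ^ (n : ℤ) * t from by ring,
      ← zpow_add₀ hcne]
    congr 2
    ring
  simp only [hedef, h1, hexp]
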